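/- Let n ≥ 3, let r_1, …, r_n > 0 and let 0 < σ < r_i for all i. Suppose α_1, …, α_n is a connecting cycle such that for every j (indices mod n) the distance from the origin O to the line through p_j and p_{j+1} equals σ and the foot of the perpendicular from O to that line lies strictly between p_j and p_{j+1}. Then the perimeter equals L = 2 Σ_{i=1}^n √(r_i² − σ²). -/

import Mathlib

open Real RealInnerProductSpace

/-- The point with polar radius `ρ` and polar angle `θ` in the Euclidean plane. -/
noncomputable def pt (ρ θ : ℝ) : EuclideanSpace ℝ (Fin 2) :=
  WithLp.toLp 2 ![ρ * Real.cos θ, ρ * Real.sin θ]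


lemma norm_pt (ρ θ : ℝ) (h : 0 ≤ ρ) : ‖pt ρ θ‖ = ρ := by
  rw [EuclideanSpace.norm_eq]
  have h2 : (∑ i, ‖pt ρ θ i‖ ^ 2) = ρ ^ 2 := by
    have hs := Real.sin_sq_add_cos_sq θ
    simp [pt, Fin.sum_univ_two, sq_abs]
    nlinarith
  rw [h2, Real.sqrt_sq h]

lemma side_len (p p' : EuclideanSpace ℝ (Fin 2)) (a b σ t : ℝ)
    (hp : ‖p‖ = a) (hp' : ‖p'‖ = b) (ht : t ∈ Set.Ioo (0:ℝ) 1)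
    (hperp : ⟪p + t • (p' - p), p' - p⟫ = 0)
    (hq : ‖p + t • (p' - p)‖ = σ) :
    dist p p' = Real.sqrt (a ^ 2 - σ ^ 2) + Real.sqrt (b ^ 2 - σ ^ 2) := by
  set v := p' - p with hv
  set q := p + t • v with hqdef
  have pyth : ∀ s : ℝ, ‖q + s • v‖ ^ 2 = σ ^ 2 + s ^ 2 * ‖v‖ ^ 2 := by
    intro s
    rw [norm_add_sq_real, norm_smul, real_inner_smul_right, hperp, hq]
    simp [mul_pow, sq_abs]
  have hpq : p = q + (-t) • v := by rw [hqdef]; module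
  have hp'q : p' = q + (1 - t) • v := by rw [hqdef, hv]; module
  have h1 : (t * ‖v‖) ^ 2 = a ^ 2 - σ ^ 2 := by
    have := pyth (-t); rw [← hpq, hp] at this; nlinarith
  have h2 : ((1 - t) * ‖v‖) ^ 2 = b ^ 2 - σ ^ 2 := by
    have := pyth (1 - t); rw [← hp'q, hp'] at this; nlinarith
  have ha : Real.sqrt (a ^ 2 - σ ^ 2) = t * ‖v‖ := by
    rw [← h1, Real.sqrt_sq (mul_nonneg (le_of_lt ht.1) (norm_nonneg v))]
  have hb : Real.sqrt (b ^ 2 - σ ^ 2) = (1 - t) * ‖v‖ := by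
    rw [← h2, Real.sqrt_sq (mul_nonneg (by linarith [ht.2]) (norm_nonneg v))]
  rw [ha, hb, dist_eq_norm, show p - p' = -v by rw [hv]; module, norm_neg]
  ring

/-- The `i`-th vertex `p_i = (r_i cos α_i, r_i sin α_i)` of the connecting cycle. -/
noncomputable def vert {n : ℕ} [NeZero n] (r α : Fin n → ℝ) (i : Fin n) :
    EuclideanSpace ℝ (Fin 2) :=
  pt (r i) (α i)

/-- The perimeter `L = Σ_j |p_j − p_{j+1}|` of the connecting cycle (indices mod `n`). -/
noncomputable def perimE {n : ℕ} [NeZero n] (r α : Fin n → ℝ) : ℝ :=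
  ∑ j, dist (vert r α j) (vert r α (j + 1))

/-- if every side of a connecting cycle is at distance `σ` from the origin and
the foot of the perpendicular from the origin to each side line lies strictly between the
two endpoints (with `0 < σ < r_i` for all `i`, so the cycle circumscribes the socle of
radius `σ`), then the perimeter equals `2 Σ_i √(r_i² − σ²)`. -/
theorem stmt_4 {n : ℕ} [NeZero n] (hn : 3 ≤ n) (r : Fin n → ℝ) (hr : ∀ i, 0 < r i)
    (α : Fin n → ℝ) (σ : ℝ) (hσ0 : 0 < σ) (hσr : ∀ i, σ < r i)
    (htan : ∀ j, Metric.infDist (0 : EuclideanSpace ℝ (Fin 2))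
        (affineSpan ℝ {vert r α j, vert r α (j + 1)} :
          Set (EuclideanSpace ℝ (Fin 2))) = σ ∧
      ∃ t ∈ Set.Ioo (0 : ℝ) 1,
        ⟪vert r α j + t • (vert r α (j + 1) - vert r α j),
            vert r α (j + 1) - vert r α j⟫ = 0 ∧
        ‖vert r α j + t • (vert r α (j + 1) - vert r α j)‖ = σ) :
    perimE r α = 2 * ∑ i, Real.sqrt (r i ^ 2 - σ ^ 2) := by
  have hside : ∀ j : Fin n, dist (vert r α j) (vert r α (j + 1)) =
      Real.sqrt (r j ^ 2 - σ ^ 2) + Real.sqrt (r (j + 1) ^ 2 - σ ^ 2) := by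
    intro j
    obtain ⟨-, t, ht, hperp, hq⟩ := htan j
    exact side_len _ _ _ _ _ _ (norm_pt _ _ (hr j).le) (norm_pt _ _ (hr (j+1)).le)
      ht hperp hq
  have hshift : (∑ j : Fin n, Real.sqrt (r (j + 1) ^ 2 - σ ^ 2)) =
      ∑ j : Fin n, Real.sqrt (r j ^ 2 - σ ^ 2) :=
    Fintype.sum_equiv (Equiv.addRight 1) _ _ (fun j => rfl)
  rw [perimE]
  simp_rw [hside]
  rw [Finset.sum_add_distrib, hshift]
  ring
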